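/- The crab graph admits no self-approaching drawing in ℝ². -/

import Mathlib

/-- The point of the polygonal path `p 0, p 1, …` lying on segment `i`
(from `p i` to `p (i+1)`) at fraction `s ∈ [0,1]`. -/
noncomputable def polyPt (p : ℕ → EuclideanSpace ℝ (Fin 2)) (i : ℕ) (s : ℝ) :
    EuclideanSpace ℝ (Fin 2) :=
  (1 - s) • p i + s • p (i + 1)

/-- `(i, s)` comes no later than `(j, t)` in the lexicographic order on parameters
of points of a polygonal path. -/
def ParamLE (i : ℕ) (s : ℝ) (j : ℕ) (t : ℝ) : Prop :=
  i < j ∨ (i = j ∧ s ≤ t)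

/-- The polygonal path on the points `p 0, …, p m` (with `m` segments, indexed
`0, …, m-1`) is self-approaching: for any three of its points `a, b, c` in order
along the path, `dist a c ≥ dist b c`. -/
def IsSelfApproachingPoly (m : ℕ) (p : ℕ → EuclideanSpace ℝ (Fin 2)) : Prop :=
  ∀ (i j k : ℕ) (s t u : ℝ), i < m → j < m → k < m →
    s ∈ Set.Icc (0 : ℝ) 1 → t ∈ Set.Icc (0 : ℝ) 1 → u ∈ Set.Icc (0 : ℝ) 1 →
    ParamLE i s j t → ParamLE j t k u →
    dist (polyPt p j t) (polyPt p k u) ≤ dist (polyPt p i s) (polyPt p k u)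

/-- The polygonal path on the points `p 0, …, p m` has increasing chords: for any
four of its points `a, b, c, d` in order along the path, `dist a d ≥ dist b c`. -/
def IsIncreasingChordsPoly (m : ℕ) (p : ℕ → EuclideanSpace ℝ (Fin 2)) : Prop :=
  ∀ (i j k l : ℕ) (s t u v : ℝ), i < m → j < m → k < m → l < m →
    s ∈ Set.Icc (0 : ℝ) 1 → t ∈ Set.Icc (0 : ℝ) 1 → u ∈ Set.Icc (0 : ℝ) 1 →
    v ∈ Set.Icc (0 : ℝ) 1 →
    ParamLE i s j t → ParamLE j t k u → ParamLE k u l v →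
    dist (polyPt p j t) (polyPt p k u) ≤ dist (polyPt p i s) (polyPt p l v)

/-- A straight-line drawing `ρ` of a graph `G` is self-approaching if `ρ` is injective
and for every ordered pair of distinct vertices `(s, t)` there is a path from `s` to `t`
in `G` whose polygonal drawing under `ρ` is self-approaching. -/
def IsSelfApproachingDrawing {V : Type*} (G : SimpleGraph V)
    (ρ : V → EuclideanSpace ℝ (Fin 2)) : Prop :=
  Function.Injective ρ ∧
  ∀ s t : V, s ≠ t → ∃ w : G.Walk s t, w.IsPath ∧
    IsSelfApproachingPoly w.length (fun n => ρ (w.getVert n))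

/-- The crab graph: a tree on 14 vertices.  Vertex `0` is `a`, `1` is `b`,
`2, 3` are `a₁, a₂`, `4, 5` are `b₁, b₂`, and `6, …, 13` are the eight leaves
`l₁, …, l₈` attached in pairs to `a₁, a₂, b₁, b₂`. -/
def crabGraph : SimpleGraph (Fin 14) :=
  SimpleGraph.fromEdgeSet
    {s(0, 1), s(0, 2), s(0, 3), s(1, 4), s(1, 5),
     s(2, 6), s(2, 7), s(3, 8), s(3, 9),
     s(4, 10), s(4, 11), s(5, 12), s(5, 13)}


/-! ### 2D vector toolbox -/

def pdot (u v : ℝ × ℝ) : ℝ := u.1 * v.1 + u.2 * v.2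
def pdet (u v : ℝ × ℝ) : ℝ := u.1 * v.2 - u.2 * v.1

lemma pdot_self_pos {v : ℝ × ℝ} (h : v ≠ 0) : 0 < pdot v v := by
  rcases v with ⟨a, b⟩
  have h' : a ≠ 0 ∨ b ≠ 0 := by
    by_contra hc; push_neg at hc; exact h (by simp [hc.1, hc.2, Prod.ext_iff])
  show 0 < a * a + b * b
  rcases h' with h1 | h1
  · nlinarith [sq_nonneg b, mul_self_pos.mpr h1]
  · nlinarith [sq_nonneg a, mul_self_pos.mpr h1]

lemma pdot_self_nonneg (v : ℝ × ℝ) : 0 ≤ pdot v v := by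
  rcases v with ⟨a, b⟩; show (0:ℝ) ≤ a * a + b * b; nlinarith [sq_nonneg a, sq_nonneg b]

lemma par_of_det_zero {v w : ℝ × ℝ} (hv : v ≠ 0) (h : pdet v w = 0) : ∃ s : ℝ, w = s • v := by
  rcases v with ⟨a, b⟩; rcases w with ⟨c, d⟩
  have h' : a * d - b * c = 0 := h
  by_cases ha : a = 0
  · have hb : b ≠ 0 := by intro hb; exact hv (by simp [ha, hb, Prod.ext_iff])
    refine ⟨d / b, ?_⟩
    have hc : c = 0 := by
      have : b * c = 0 := by rw [ha] at h'; linarith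
      rcases mul_eq_zero.mp this with h1 | h1
      · exact absurd h1 hb
      · exact h1
    simp [Prod.ext_iff, ha, hc]
    field_simp
  · refine ⟨c / a, ?_⟩
    simp only [Prod.smul_def, smul_eq_mul, Prod.ext_iff]
    constructor
    · field_simp
    · field_simp; linarith


lemma pdot_smul_left (s : ℝ) (u v : ℝ × ℝ) : pdot (s • u) v = s * pdot u v := by
  unfold pdot; simp [Prod.smul_def]; ring

lemma pdot_comm (u v : ℝ × ℝ) : pdot u v = pdot v u := by unfold pdot; ring

lemma pdot_sub_right (u a b : ℝ × ℝ) : pdot u (a - b) = pdot u a - pdot u b := by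
  unfold pdot; simp [Prod.fst_sub, Prod.snd_sub]; ring

lemma pdot_sub_left (a b u : ℝ × ℝ) : pdot (a - b) u = pdot a u - pdot b u := by
  unfold pdot; simp [Prod.fst_sub, Prod.snd_sub]; ring

-- perp-perp: two vectors orthogonal to same nonzero vector are parallel
lemma perp_perp {y v w : ℝ × ℝ} (hy : y ≠ 0) (hv : v ≠ 0)
    (h1 : pdot y v = 0) (h2 : pdot y w = 0) : ∃ s : ℝ, w = s • v := by
  apply par_of_det_zero hv
  have e1 : y.1 * pdet v w = w.2 * pdot y v - v.2 * pdot y w := by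
    unfold pdet pdot; ring
  have e2 : y.2 * pdet v w = v.1 * pdot y w - w.1 * pdot y v := by
    unfold pdet pdot; ring
  rw [h1, h2] at e1 e2
  simp at e1 e2
  rcases e1 with e1 | e1
  · rcases e2 with e2 | e2
    · exact absurd (by simp [Prod.ext_iff, e1, e2] : y = 0) hy
    · exact e2
  · exact e1

-- polar cone lemma in 2D
lemma polar_lemma {y1 y2 u v : ℝ × ℝ} (hdet : pdet y1 y2 ≠ 0)
    (h12 : pdot y1 y2 ≤ 0) (hu1 : pdot y1 u ≤ 0) (hu2 : pdot y2 u ≤ 0)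
    (hv1 : pdot y1 v ≤ 0) (hv2 : pdot y2 v ≤ 0) : 0 ≤ pdot u v := by
  have key : (pdet y1 y2)^2 * pdot u v =
      pdot y1 u * pdot y1 v * pdot y2 y2
      - (pdot y1 u * pdot y2 v + pdot y2 u * pdot y1 v) * pdot y1 y2
      + pdot y2 u * pdot y2 v * pdot y1 y1 := by
    unfold pdet pdot; ring
  have hd2 : 0 < (pdet y1 y2)^2 := by positivity
  have t1 : 0 ≤ pdot y1 u * pdot y1 v * pdot y2 y2 := by
    have hy2 : (0:ℝ) < pdot y2 y2 := pdot_self_pos (by intro h0; apply hdet; simp [h0, pdet])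
    nlinarith [mul_nonneg (neg_nonneg.mpr hu1) (neg_nonneg.mpr hv1)]
  have t2 : 0 ≤ pdot y2 u * pdot y2 v * pdot y1 y1 := by
    have hy1 : (0:ℝ) < pdot y1 y1 := pdot_self_pos (by intro h0; apply hdet; simp [h0, pdet])
    nlinarith [mul_nonneg (neg_nonneg.mpr hu2) (neg_nonneg.mpr hv2)]
  have t3 : 0 ≤ - (pdot y1 u * pdot y2 v + pdot y2 u * pdot y1 v) * pdot y1 y2 := by
    nlinarith [mul_nonneg (neg_nonneg.mpr hu1) (neg_nonneg.mpr hv2),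
      mul_nonneg (neg_nonneg.mpr hu2) (neg_nonneg.mpr hv1)]
  by_contra hc
  push_neg at hc
  nlinarith [mul_pos hd2 (neg_pos.mpr hc)]

-- degenerate wedge: both halfplane normals antiparallel force equality
lemma deg_halfplane {y1 y2 z : ℝ × ℝ} (hy1 : y1 ≠ 0) (hy2 : y2 ≠ 0)
    (hdet : pdet y1 y2 = 0) (h12 : pdot y1 y2 ≤ 0)
    (h1 : pdot y1 z ≤ 0) (h2 : pdot y2 z ≤ 0) : pdot y1 z = 0 := by
  obtain ⟨t, ht⟩ := par_of_det_zero hy1 hdet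
  have htneg : t < 0 := by
    have h12' : pdot y1 y2 = t * pdot y1 y1 := by rw [ht, pdot_comm, pdot_smul_left, pdot_comm]
    have hpos := pdot_self_pos hy1
    have ht0 : t ≠ 0 := by intro h0; rw [h0, zero_smul] at ht; exact hy2 ht
    rcases lt_trichotomy t 0 with h | h | h
    · exact h
    · exact absurd h ht0
    · nlinarith [h12', h12]
  have h2' : pdot y2 z = t * pdot y1 z := by rw [ht, pdot_smul_left]
  nlinarith [h2', h2, h1]

-- collinear contradiction
lemma deg_contra {y M1 M2 K : ℝ × ℝ} (hy : y ≠ 0) (hM1 : M1 ≠ 0) (hM2 : M2 ≠ 0) (hK : K ≠ 0)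
    (p1 : pdot y M1 = 0) (p2 : pdot y M2 = 0) (p3 : pdot y K = 0)
    (c12 : pdot M1 M2 ≤ 0) (c1K : pdot M1 K ≤ 0) (c2K : pdot M2 K ≤ 0) : False := by
  obtain ⟨t, ht⟩ := perp_perp hy hM1 p1 p2
  obtain ⟨s, hs⟩ := perp_perp hy hM1 p1 p3
  have hp := pdot_self_pos hM1
  have e1 : pdot M1 M2 = t * pdot M1 M1 := by rw [ht, pdot_comm, pdot_smul_left, pdot_comm]
  have e2 : pdot M1 K = s * pdot M1 M1 := by rw [hs, pdot_comm, pdot_smul_left, pdot_comm]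
  have e3 : pdot M2 K = t * s * pdot M1 M1 := by
    rw [ht, hs, pdot_smul_left, pdot_comm, pdot_smul_left, pdot_comm]; ring
  have htneg : t < 0 := by
    have ht0 : t ≠ 0 := by intro h0; rw [h0, zero_smul] at ht; exact hM2 ht
    rcases lt_trichotomy t 0 with h | h | h
    · exact h
    · exact absurd h ht0
    · nlinarith
  have hsle : s ≤ 0 := by nlinarith
  have hsge : 0 ≤ s := by
    by_contra hc
    push_neg at hc
    nlinarith [mul_pos_of_neg_of_neg htneg hc]
  have hs0 : s = 0 := le_antisymm hsle hsge
  rw [hs0, zero_smul] at hs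
  exact hK hs

lemma cone_middle {v2 v3 v4 : ℝ × ℝ} (n2 : v2 ≠ 0) (n3 : v3 ≠ 0) (n4 : v4 ≠ 0)
    (h23 : 0 ≤ pdot v2 v3) (h24 : 0 ≤ pdot v2 v4) (h34 : 0 ≤ pdot v3 v4) :
    (∃ α β : ℝ, 0 ≤ α ∧ 0 ≤ β ∧ v4 = α • v2 + β • v3) ∨
    (∃ α β : ℝ, 0 ≤ α ∧ 0 ≤ β ∧ v3 = α • v2 + β • v4) ∨
    (∃ α β : ℝ, 0 ≤ α ∧ 0 ≤ β ∧ v2 = α • v3 + β • v4) := by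
  by_cases hD : pdet v2 v3 = 0
  · obtain ⟨t, ht⟩ := par_of_det_zero n2 hD
    have ht0 : 0 ≤ t := by
      have e : pdot v2 v3 = t * pdot v2 v2 := by rw [ht, pdot_comm, pdot_smul_left, pdot_comm]
      nlinarith [pdot_self_pos n2]
    exact Or.inr (Or.inl ⟨t, 0, ht0, le_refl 0, by rw [ht]; simp⟩)
  · -- Cramer
    set D := pdet v2 v3 with hDdef
    set α : ℝ := pdet v4 v3 / D with hα
    set β : ℝ := pdet v2 v4 / D with hβ
    have hcram : v4 = α • v2 + β • v3 := by
      have h1 : D * v4.1 = pdet v4 v3 * v2.1 + pdet v2 v4 * v3.1 := by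
        rw [hDdef]; unfold pdet; ring
      have h2 : D * v4.2 = pdet v4 v3 * v2.2 + pdet v2 v4 * v3.2 := by
        rw [hDdef]; unfold pdet; ring
      have : v4 = ((pdet v4 v3)/D) • v2 + ((pdet v2 v4)/D) • v3 := by
        apply Prod.ext
        · simp [Prod.smul_def]; field_simp; linarith [h1]
        · simp [Prod.smul_def]; field_simp; linarith [h2]
      exact this
    rcases le_or_gt 0 α with hα0 | hα0
    · rcases le_or_gt 0 β with hβ0 | hβ0
      · exact Or.inl ⟨α, β, hα0, hβ0, hcram⟩
      · -- β < 0 : v2 middle (if α > 0) else contradiction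
        rcases eq_or_lt_of_le hα0 with hα1 | hα1
        · -- α = 0: v4 = β v3 with β < 0 contradicts h34
          exfalso
          have : v4 = β • v3 := by rw [hcram, ← hα1]; simp
          have e : pdot v3 v4 = β * pdot v3 v3 := by rw [this, pdot_comm, pdot_smul_left, pdot_comm]
          nlinarith [pdot_self_pos n3]
        · have hαne : α ≠ 0 := ne_of_gt hα1
          refine Or.inr (Or.inr ⟨-β/α, 1/α, div_nonneg (by linarith) hα1.le, (one_div_pos.mpr hα1).le, ?_⟩)
          have e1 := congrArg Prod.fst hcram
          have e2 := congrArg Prod.snd hcram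
          simp [Prod.smul_def] at e1 e2
          apply Prod.ext <;> simp [Prod.smul_def] <;> field_simp <;> nlinarith [e1, e2]
    · rcases le_or_gt 0 β with hβ0 | hβ0
      · rcases eq_or_lt_of_le hβ0 with hβ1 | hβ1
        · exfalso
          have : v4 = α • v2 := by rw [hcram, ← hβ1]; simp
          have e : pdot v2 v4 = α * pdot v2 v2 := by rw [this, pdot_comm, pdot_smul_left, pdot_comm]
          nlinarith [pdot_self_pos n2]
        · have hβne : β ≠ 0 := ne_of_gt hβ1
          refine Or.inr (Or.inl ⟨-α/β, 1/β, div_nonneg (by linarith) hβ1.le, (one_div_pos.mpr hβ1).le, ?_⟩)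
          have e1 := congrArg Prod.fst hcram
          have e2 := congrArg Prod.snd hcram
          simp [Prod.smul_def] at e1 e2
          apply Prod.ext <;> simp [Prod.smul_def] <;> field_simp <;> nlinarith [e1, e2]
      · exfalso
        have e : pdot v4 v4 = α * pdot v2 v4 + β * pdot v3 v4 := by
          nth_rewrite 1 [hcram]
          unfold pdot
          simp [Prod.smul_def]
          ring
        nlinarith [pdot_self_pos n4, mul_nonpos_of_nonpos_of_nonneg hα0.le h24,
          mul_nonpos_of_nonpos_of_nonneg hβ0.le h34]

set_option maxHeartbeats 1000000 in

lemma core_scalar (α β p q r : ℝ) (hp : 0 < p) (hq : 0 < q) (hr : 0 ≤ r)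
    (hα : 0 ≤ α) (hβ : 0 ≤ β)
    (h1 : α*p + β*r ≤ p) (h1' : α*r + β*q ≤ q)
    (h4 : α*p + β*r ≤ α^2*p + 2*α*β*r + β^2*q)
    (h4' : α*r + β*q ≤ α^2*p + 2*α*β*r + β^2*q)
    (h5 : (α*p + β*r) + (α*r + β*q) ≤ α^2*p + 2*α*β*r + β^2*q + r)
    (hd1 : 0 < (α-1)^2*p + 2*(α-1)*β*r + β^2*q)
    (hd2 : 0 < α^2*p + 2*α*(β-1)*r + (β-1)^2*q)
    (hd3 : 0 < α^2*p + 2*α*β*r + β^2*q)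
    (hd4 : 2*r < p + q) :
    r = 0 ∧ α = 1 ∧ β = 1 := by
  rcases eq_or_lt_of_le hβ with hβ0 | hβ0
  · exfalso
    rw [← hβ0] at h1 h4 hd1 hd3
    have hα0 : 0 < α := by
      rcases eq_or_lt_of_le hα with h0 | h0
      · exfalso; rw [← h0] at hd3; nlinarith [hd3]
      · exact h0
    have hαge : 1 ≤ α := by nlinarith [h4]
    have hαle : α ≤ 1 := by nlinarith [h1, mul_nonneg hα hr]
    have hone : α = 1 := le_antisymm hαle hαge
    rw [hone] at hd1; nlinarith [hd1]
  rcases eq_or_lt_of_le hα with hα0 | hα0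
  · exfalso
    rw [← hα0] at h1' h4' hd2 hd3
    have hβpos : 0 < β := by
      rcases eq_or_lt_of_le hβ with h0 | h0
      · exfalso; rw [← h0] at hd3; nlinarith [hd3]
      · exact h0
    have hβge : 1 ≤ β := by nlinarith [h4']
    have hβle : β ≤ 1 := by nlinarith [h1', mul_nonneg hβ hr]
    have hone : β = 1 := le_antisymm hβle hβge
    rw [hone] at hd2; nlinarith [hd2]
  -- now α, β > 0
  have hαle : α ≤ 1 := by nlinarith [h1, mul_nonneg hβ hr]
  have hβle : β ≤ 1 := by nlinarith [h1', mul_nonneg hα hr]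
  have hApos : 0 < α*p + β*r := add_pos_of_pos_of_nonneg (mul_pos hα0 hp) (mul_nonneg hβ hr)
  have hBpos : 0 < α*r + β*q := add_pos_of_nonneg_of_pos (mul_nonneg hα hr) (mul_pos hβ0 hq)
  have hr0 : r = 0 := by
    rcases eq_or_lt_of_le hr with h | hrpos
    · exact h.symm
    exfalso
    have s2a : (1-α)*(α*p + β*r) ≤ β*(α*r + β*q) := by nlinarith [h4]
    have s2b : (1-β)*(α*r + β*q) ≤ α*(α*p + β*r) := by nlinarith [h4']
    have s2 : 1 ≤ α + β := by
      by_contra hc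
      push_neg at hc
      have hα1 : α < 1 := by linarith
      have hβ1 : β < 1 := by linarith
      have hba : β < 1 - α := by linarith
      have hab : α < 1 - β := by linarith
      have c1 : β*(α*r + β*q) < (1-α)*(α*r + β*q) := by nlinarith [hBpos]
      have c2 : α*(α*p + β*r) < (1-β)*(α*p + β*r) := by nlinarith [hApos]
      have d1 : (1-α)*(α*p + β*r) < (1-α)*(α*r + β*q) := lt_of_le_of_lt s2a c1
      have d2 : (1-β)*(α*r + β*q) < (1-β)*(α*p + β*r) := lt_of_le_of_lt s2b c2
      have e1 : (α*p + β*r) < (α*r + β*q) := by nlinarith [d1]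
      have e2 : (α*r + β*q) < (α*p + β*r) := by nlinarith [d2]
      linarith
    have s4a : β*r ≤ (1-α)*p := by nlinarith [h1]
    have s4b : α*r ≤ (1-β)*q := by nlinarith [h1']
    have s3 : (1-α)*(α*p + β*r) + (1-β)*(α*r + β*q) ≤ r := by nlinarith [h5]
    have b1 : α*(β*r) ≤ α*((1-α)*p) := mul_le_mul_of_nonneg_left s4a hα
    have b2 : β*(α*r) ≤ β*((1-β)*q) := mul_le_mul_of_nonneg_left s4b hβ
    have s4 : α + β ≤ 1 := by nlinarith [s3, b1, b2, hrpos, mul_nonneg (mul_nonneg hα hβ) hr]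
    have f1 : (1-α) = β := by linarith
    have f2 : (1-β) = α := by linarith
    have final : α*β*(p+q) ≤ 2*α*β*r := by
      rw [f1, f2] at s3
      nlinarith [s3]
    have hαβpos : 0 < α*β := mul_pos hα0 hβ0
    nlinarith [final, hαβpos, hd4, mul_lt_mul_of_pos_left hd4 hαβpos]
  subst hr0
  have k5 : 0 ≤ α*(α-1)*p + β*(β-1)*q := by nlinarith [h5]
  have k1 : α*(α-1)*p ≤ 0 := by nlinarith
  have k2 : β*(β-1)*q ≤ 0 := by nlinarith
  have z1 : α*(α-1) = 0 := by
    rcases mul_eq_zero.mp (show (α*(α-1))*p = 0 by linarith) with h | h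
    · exact h
    · exact absurd h (ne_of_gt hp)
  have z2 : β*(β-1) = 0 := by
    rcases mul_eq_zero.mp (show (β*(β-1))*q = 0 by linarith) with h | h
    · exact h
    · exact absurd h (ne_of_gt hq)
  have zα : α = 1 := by
    rcases mul_eq_zero.mp z1 with h | h
    · exact absurd h (ne_of_gt hα0)
    · linarith
  have zβ : β = 1 := by
    rcases mul_eq_zero.mp z2 with h | h
    · exact absurd h (ne_of_gt hβ0)
    · linarith
  exact ⟨rfl, zα, zβ⟩

set_option maxHeartbeats 1000000 in
lemma rect_lemma {d e o : ℝ × ℝ} {α β : ℝ} (hα : 0 ≤ α) (hβ : 0 ≤ β)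
    (ho : o = α • d + β • e)
    (hde : 0 ≤ pdot d e)
    (hd2 : 0 ≤ pdot (0 - d) (o - d))
    (he2 : 0 ≤ pdot (0 - e) (o - e))
    (hoa : 0 ≤ pdot (d - o) (0 - o))
    (hob : 0 ≤ pdot (e - o) (0 - o))
    (hoc : 0 ≤ pdot (d - o) (e - o))
    (nd : d ≠ 0) (ne' : e ≠ 0) (no : o ≠ 0)
    (nod : o ≠ d) (noe : o ≠ e) (nde : d ≠ e) :
    pdot d e = 0 ∧ o = d + e := by
  have Pd := pdot_self_pos nd
  have Pe := pdot_self_pos ne'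
  have Po := pdot_self_pos no
  have Pod := pdot_self_pos (sub_ne_zero.mpr nod)
  have Poe := pdot_self_pos (sub_ne_zero.mpr noe)
  have Pde := pdot_self_pos (sub_ne_zero.mpr nde)
  obtain ⟨d1, d2⟩ := d
  obtain ⟨e1, e2⟩ := e
  subst ho
  simp only [pdot, Prod.smul_mk, Prod.mk_add_mk, Prod.mk_sub_mk, Prod.fst, Prod.snd,
    smul_eq_mul, Prod.fst_sub, Prod.snd_sub, Prod.fst_add, Prod.snd_add,
    Prod.fst_zero, Prod.snd_zero] at hde hd2 he2 hoa hob hoc Pd Pe Po Pod Poe Pde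
  have key := core_scalar α β (d1^2+d2^2) (e1^2+e2^2) (d1*e1+d2*e2)
    (by linarith [Pd]) (by linarith [Pe]) (by linarith [hde]) hα hβ
    (by linarith [hd2]) (by linarith [he2])
    (by linarith [hoa]) (by linarith [hob]) (by linarith [hoc])
    (by linarith [Pod]) (by linarith [Poe]) (by linarith [Po]) (by linarith [Pde])
  refine ⟨by simpa [pdot] using key.1, ?_⟩
  rw [key.2.1, key.2.2]
  simp


lemma final_step {d e u : ℝ × ℝ} (nd : d ≠ 0) (ne' : e ≠ 0) (nu : u ≠ 0)
    (r0 : pdot d e = 0) (uX : pdot u d = 0) (uY : pdot u e = 0) : False := by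
  obtain ⟨s, hs⟩ := perp_perp nd ne' r0 (by rw [pdot_comm]; exact uX)
  rw [hs, pdot_smul_left] at uY
  rcases mul_eq_zero.mp uY with h | h
  · rw [h, zero_smul] at hs; exact nu hs
  · exact absurd h (ne_of_gt (pdot_self_pos ne'))

set_option maxHeartbeats 2000000 in
lemma geom (A1 A2 B1 B2 L1 L2 L3 L4 L5 L6 L7 L8 : ℝ × ℝ)
    (nA1A2 : A1 ≠ A2) (nA1B1 : A1 ≠ B1) (nA1B2 : A1 ≠ B2) (nA2B1 : A2 ≠ B1) (nA2B2 : A2 ≠ B2) (nB1B2 : B1 ≠ B2)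
    (nL1 : L1 ≠ A1) (nL2 : L2 ≠ A1) (nL3 : L3 ≠ A2) (nL4 : L4 ≠ A2) (nL5 : L5 ≠ B1) (nL6 : L6 ≠ B1) (nL7 : L7 ≠ B2) (nL8 : L8 ≠ B2)
    (cL1A2 : pdot (L1 - A1) (A2 - A1) ≤ 0) (cL1B1 : pdot (L1 - A1) (B1 - A1) ≤ 0) (cL1B2 : pdot (L1 - A1) (B2 - A1) ≤ 0) (cL1L2 : pdot (L1 - A1) (L2 - A1) ≤ 0) (cL1L3 : pdot (L1 - A1) (L3 - A1) ≤ 0) (cL1L4 : pdot (L1 - A1) (L4 - A1) ≤ 0)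
    (cL2A2 : pdot (L2 - A1) (A2 - A1) ≤ 0) (cL2B1 : pdot (L2 - A1) (B1 - A1) ≤ 0) (cL2B2 : pdot (L2 - A1) (B2 - A1) ≤ 0) (cL2L1 : pdot (L2 - A1) (L1 - A1) ≤ 0) (cL2L3 : pdot (L2 - A1) (L3 - A1) ≤ 0) (cL2L4 : pdot (L2 - A1) (L4 - A1) ≤ 0)
    (cL3A1 : pdot (L3 - A2) (A1 - A2) ≤ 0) (cL3B1 : pdot (L3 - A2) (B1 - A2) ≤ 0) (cL3B2 : pdot (L3 - A2) (B2 - A2) ≤ 0) (cL3L1 : pdot (L3 - A2) (L1 - A2) ≤ 0) (cL3L2 : pdot (L3 - A2) (L2 - A2) ≤ 0) (cL3L4 : pdot (L3 - A2) (L4 - A2) ≤ 0)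
    (cL4A1 : pdot (L4 - A2) (A1 - A2) ≤ 0) (cL4B1 : pdot (L4 - A2) (B1 - A2) ≤ 0) (cL4B2 : pdot (L4 - A2) (B2 - A2) ≤ 0) (cL4L1 : pdot (L4 - A2) (L1 - A2) ≤ 0) (cL4L2 : pdot (L4 - A2) (L2 - A2) ≤ 0) (cL4L3 : pdot (L4 - A2) (L3 - A2) ≤ 0)
    (cL5A1 : pdot (L5 - B1) (A1 - B1) ≤ 0) (cL5A2 : pdot (L5 - B1) (A2 - B1) ≤ 0) (cL5B2 : pdot (L5 - B1) (B2 - B1) ≤ 0) (cL5L1 : pdot (L5 - B1) (L1 - B1) ≤ 0) (cL5L2 : pdot (L5 - B1) (L2 - B1) ≤ 0) (cL5L6 : pdot (L5 - B1) (L6 - B1) ≤ 0)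
    (cL6A1 : pdot (L6 - B1) (A1 - B1) ≤ 0) (cL6A2 : pdot (L6 - B1) (A2 - B1) ≤ 0) (cL6B2 : pdot (L6 - B1) (B2 - B1) ≤ 0) (cL6L1 : pdot (L6 - B1) (L1 - B1) ≤ 0) (cL6L2 : pdot (L6 - B1) (L2 - B1) ≤ 0) (cL6L5 : pdot (L6 - B1) (L5 - B1) ≤ 0)
    (cL7A1 : pdot (L7 - B2) (A1 - B2) ≤ 0) (cL7A2 : pdot (L7 - B2) (A2 - B2) ≤ 0) (cL7B1 : pdot (L7 - B2) (B1 - B2) ≤ 0) (cL7L1 : pdot (L7 - B2) (L1 - B2) ≤ 0) (cL7L2 : pdot (L7 - B2) (L2 - B2) ≤ 0) (cL7L8 : pdot (L7 - B2) (L8 - B2) ≤ 0)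
    (cL8A1 : pdot (L8 - B2) (A1 - B2) ≤ 0) (cL8A2 : pdot (L8 - B2) (A2 - B2) ≤ 0) (cL8B1 : pdot (L8 - B2) (B1 - B2) ≤ 0) (cL8L1 : pdot (L8 - B2) (L1 - B2) ≤ 0) (cL8L2 : pdot (L8 - B2) (L2 - B2) ≤ 0) (cL8L7 : pdot (L8 - B2) (L7 - B2) ≤ 0)
    : False := by
  have zL1 : L1 - A1 ≠ 0 := sub_ne_zero.mpr nL1
  have zL2 : L2 - A1 ≠ 0 := sub_ne_zero.mpr nL2
  have zL3 : L3 - A2 ≠ 0 := sub_ne_zero.mpr nL3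
  have zL4 : L4 - A2 ≠ 0 := sub_ne_zero.mpr nL4
  have zL5 : L5 - B1 ≠ 0 := sub_ne_zero.mpr nL5
  have zL6 : L6 - B1 ≠ 0 := sub_ne_zero.mpr nL6
  have zL7 : L7 - B2 ≠ 0 := sub_ne_zero.mpr nL7
  have zL8 : L8 - B2 ≠ 0 := sub_ne_zero.mpr nL8
  by_cases D1 : pdet (L1 - A1) (L2 - A1) = 0
  case pos =>
    have perpA2 : pdot (L1 - A1) (A2 - A1) = 0 := deg_halfplane zL1 zL2 D1 cL1L2 cL1A2 cL2A2
    have perpB1 : pdot (L1 - A1) (B1 - A1) = 0 := deg_halfplane zL1 zL2 D1 cL1L2 cL1B1 cL2B1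
    have perpL3 : pdot (L1 - A1) (L3 - A1) = 0 := deg_halfplane zL1 zL2 D1 cL1L2 cL1L3 cL2L3
    have perpL4 : pdot (L1 - A1) (L4 - A1) = 0 := deg_halfplane zL1 zL2 D1 cL1L2 cL1L4 cL2L4
    have eM1 : L3 - A2 = (L3 - A1) - (A2 - A1) := by abel
    have pM1 : pdot (L1 - A1) (L3 - A2) = 0 := by rw [eM1, pdot_sub_right]; rw [perpL3, perpA2]; ring
    have eM2 : L4 - A2 = (L4 - A1) - (A2 - A1) := by abel
    have pM2 : pdot (L1 - A1) (L4 - A2) = 0 := by rw [eM2, pdot_sub_right]; rw [perpL4, perpA2]; ring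
    have eK : B1 - A2 = (B1 - A1) - (A2 - A1) := by abel
    have pK : pdot (L1 - A1) (B1 - A2) = 0 := by rw [eK, pdot_sub_right]; rw [perpB1, perpA2]; ring
    have nK : B1 - A2 ≠ 0 := sub_ne_zero.mpr (fun h => nA2B1 h.symm)
    have nM1 : L3 - A2 ≠ 0 := sub_ne_zero.mpr nL3
    have nM2 : L4 - A2 ≠ 0 := sub_ne_zero.mpr nL4
    exact deg_contra zL1 nM1 nM2 nK pM1 pM2 pK cL3L4 cL3B1 cL4B1
  by_cases D2 : pdet (L3 - A2) (L4 - A2) = 0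
  case pos =>
    have perpA1 : pdot (L3 - A2) (A1 - A2) = 0 := deg_halfplane zL3 zL4 D2 cL3L4 cL3A1 cL4A1
    have perpB1 : pdot (L3 - A2) (B1 - A2) = 0 := deg_halfplane zL3 zL4 D2 cL3L4 cL3B1 cL4B1
    have perpL1 : pdot (L3 - A2) (L1 - A2) = 0 := deg_halfplane zL3 zL4 D2 cL3L4 cL3L1 cL4L1
    have perpL2 : pdot (L3 - A2) (L2 - A2) = 0 := deg_halfplane zL3 zL4 D2 cL3L4 cL3L2 cL4L2
    have eM1 : L1 - A1 = (L1 - A2) - (A1 - A2) := by abel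
    have pM1 : pdot (L3 - A2) (L1 - A1) = 0 := by rw [eM1, pdot_sub_right]; rw [perpL1, perpA1]; ring
    have eM2 : L2 - A1 = (L2 - A2) - (A1 - A2) := by abel
    have pM2 : pdot (L3 - A2) (L2 - A1) = 0 := by rw [eM2, pdot_sub_right]; rw [perpL2, perpA1]; ring
    have eK : B1 - A1 = (B1 - A2) - (A1 - A2) := by abel
    have pK : pdot (L3 - A2) (B1 - A1) = 0 := by rw [eK, pdot_sub_right]; rw [perpB1, perpA1]; ring
    have nK : B1 - A1 ≠ 0 := sub_ne_zero.mpr (fun h => nA1B1 h.symm)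
    have nM1 : L1 - A1 ≠ 0 := sub_ne_zero.mpr nL1
    have nM2 : L2 - A1 ≠ 0 := sub_ne_zero.mpr nL2
    exact deg_contra zL3 nM1 nM2 nK pM1 pM2 pK cL1L2 cL1B1 cL2B1
  by_cases D3 : pdet (L5 - B1) (L6 - B1) = 0
  case pos =>
    have perpA1 : pdot (L5 - B1) (A1 - B1) = 0 := deg_halfplane zL5 zL6 D3 cL5L6 cL5A1 cL6A1
    have perpA2 : pdot (L5 - B1) (A2 - B1) = 0 := deg_halfplane zL5 zL6 D3 cL5L6 cL5A2 cL6A2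
    have perpL1 : pdot (L5 - B1) (L1 - B1) = 0 := deg_halfplane zL5 zL6 D3 cL5L6 cL5L1 cL6L1
    have perpL2 : pdot (L5 - B1) (L2 - B1) = 0 := deg_halfplane zL5 zL6 D3 cL5L6 cL5L2 cL6L2
    have eM1 : L1 - A1 = (L1 - B1) - (A1 - B1) := by abel
    have pM1 : pdot (L5 - B1) (L1 - A1) = 0 := by rw [eM1, pdot_sub_right]; rw [perpL1, perpA1]; ring
    have eM2 : L2 - A1 = (L2 - B1) - (A1 - B1) := by abel
    have pM2 : pdot (L5 - B1) (L2 - A1) = 0 := by rw [eM2, pdot_sub_right]; rw [perpL2, perpA1]; ring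
    have eK : A2 - A1 = (A2 - B1) - (A1 - B1) := by abel
    have pK : pdot (L5 - B1) (A2 - A1) = 0 := by rw [eK, pdot_sub_right]; rw [perpA2, perpA1]; ring
    have nK : A2 - A1 ≠ 0 := sub_ne_zero.mpr (fun h => nA1A2 h.symm)
    have nM1 : L1 - A1 ≠ 0 := sub_ne_zero.mpr nL1
    have nM2 : L2 - A1 ≠ 0 := sub_ne_zero.mpr nL2
    exact deg_contra zL5 nM1 nM2 nK pM1 pM2 pK cL1L2 cL1A2 cL2A2
  by_cases D4 : pdet (L7 - B2) (L8 - B2) = 0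
  case pos =>
    have perpA1 : pdot (L7 - B2) (A1 - B2) = 0 := deg_halfplane zL7 zL8 D4 cL7L8 cL7A1 cL8A1
    have perpA2 : pdot (L7 - B2) (A2 - B2) = 0 := deg_halfplane zL7 zL8 D4 cL7L8 cL7A2 cL8A2
    have perpL1 : pdot (L7 - B2) (L1 - B2) = 0 := deg_halfplane zL7 zL8 D4 cL7L8 cL7L1 cL8L1
    have perpL2 : pdot (L7 - B2) (L2 - B2) = 0 := deg_halfplane zL7 zL8 D4 cL7L8 cL7L2 cL8L2
    have eM1 : L1 - A1 = (L1 - B2) - (A1 - B2) := by abel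
    have pM1 : pdot (L7 - B2) (L1 - A1) = 0 := by rw [eM1, pdot_sub_right]; rw [perpL1, perpA1]; ring
    have eM2 : L2 - A1 = (L2 - B2) - (A1 - B2) := by abel
    have pM2 : pdot (L7 - B2) (L2 - A1) = 0 := by rw [eM2, pdot_sub_right]; rw [perpL2, perpA1]; ring
    have eK : A2 - A1 = (A2 - B2) - (A1 - B2) := by abel
    have pK : pdot (L7 - B2) (A2 - A1) = 0 := by rw [eK, pdot_sub_right]; rw [perpA2, perpA1]; ring
    have nK : A2 - A1 ≠ 0 := sub_ne_zero.mpr (fun h => nA1A2 h.symm)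
    have nM1 : L1 - A1 ≠ 0 := sub_ne_zero.mpr nL1
    have nM2 : L2 - A1 ≠ 0 := sub_ne_zero.mpr nL2
    exact deg_contra zL7 nM1 nM2 nK pM1 pM2 pK cL1L2 cL1A2 cL2A2
  have w23 : 0 ≤ pdot (A2 - A1) (B1 - A1) := polar_lemma D1 cL1L2 cL1A2 cL2A2 cL1B1 cL2B1
  have w24 : 0 ≤ pdot (A2 - A1) (B2 - A1) := polar_lemma D1 cL1L2 cL1A2 cL2A2 cL1B2 cL2B2
  have w34 : 0 ≤ pdot (B1 - A1) (B2 - A1) := polar_lemma D1 cL1L2 cL1B1 cL2B1 cL1B2 cL2B2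
  have nv2 : A2 - A1 ≠ 0 := sub_ne_zero.mpr (fun h => nA1A2 h.symm)
  have nv3 : B1 - A1 ≠ 0 := sub_ne_zero.mpr (fun h => nA1B1 h.symm)
  have nv4 : B2 - A1 ≠ 0 := sub_ne_zero.mpr (fun h => nA1B2 h.symm)
  have nu : L1 - A1 ≠ 0 := zL1
  rcases cone_middle nv2 nv3 nv4 w23 w24 w34 with ⟨α, β, ha, hb, hmid⟩ | ⟨α, β, ha, hb, hmid⟩ | ⟨α, β, ha, hb, hmid⟩
  · -- middle B2
    have hd2 : 0 ≤ pdot (0 - (A2 - A1)) ((B2 - A1) - (A2 - A1)) := by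
      rw [show (0:ℝ×ℝ) - (A2 - A1) = A1 - A2 by abel, show (B2 - A1) - (A2 - A1) = B2 - A2 by abel]
      exact polar_lemma D2 cL3L4 cL3A1 cL4A1 cL3B2 cL4B2
    have he2 : 0 ≤ pdot (0 - (B1 - A1)) ((B2 - A1) - (B1 - A1)) := by
      rw [show (0:ℝ×ℝ) - (B1 - A1) = A1 - B1 by abel, show (B2 - A1) - (B1 - A1) = B2 - B1 by abel]
      exact polar_lemma D3 cL5L6 cL5A1 cL6A1 cL5B2 cL6B2
    have hoa : 0 ≤ pdot ((A2 - A1) - (B2 - A1)) (0 - (B2 - A1)) := by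
      rw [show (A2 - A1) - (B2 - A1) = A2 - B2 by abel, show (0:ℝ×ℝ) - (B2 - A1) = A1 - B2 by abel]
      exact polar_lemma D4 cL7L8 cL7A2 cL8A2 cL7A1 cL8A1
    have hob : 0 ≤ pdot ((B1 - A1) - (B2 - A1)) (0 - (B2 - A1)) := by
      rw [show (B1 - A1) - (B2 - A1) = B1 - B2 by abel, show (0:ℝ×ℝ) - (B2 - A1) = A1 - B2 by abel]
      exact polar_lemma D4 cL7L8 cL7B1 cL8B1 cL7A1 cL8A1
    have hoc : 0 ≤ pdot ((A2 - A1) - (B2 - A1)) ((B1 - A1) - (B2 - A1)) := by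
      rw [show (A2 - A1) - (B2 - A1) = A2 - B2 by abel, show (B1 - A1) - (B2 - A1) = B1 - B2 by abel]
      exact polar_lemma D4 cL7L8 cL7A2 cL8A2 cL7B1 cL8B1
    have nod : (B2 - A1) ≠ (A2 - A1) := fun h => (fun h => nA2B2 h.symm) (sub_left_injective h)
    have noe : (B2 - A1) ≠ (B1 - A1) := fun h => (fun h => nB1B2 h.symm) (sub_left_injective h)
    have nde : (A2 - A1) ≠ (B1 - A1) := fun h => nA2B1 (sub_left_injective h)
    obtain ⟨r0, hsum⟩ := rect_lemma ha hb hmid w23 hd2 he2 hoa hob hoc nv2 nv3 nv4 nod noe nde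
    have iX : pdot (L1 - A1) (A2 - A1) ≤ 0 := cL1A2
    have iY : pdot (L1 - A1) (B1 - A1) ≤ 0 := cL1B1
    have fX : 0 ≤ pdot (L1 - A2) (B2 - A2) := polar_lemma D2 cL3L4 cL3L1 cL4L1 cL3B2 cL4B2
    have fY : 0 ≤ pdot (L1 - B1) (B2 - B1) := polar_lemma D3 cL5L6 cL5L1 cL6L1 cL5B2 cL6B2
    have eX : pdot (L1 - A2) (B2 - A2) = pdot (L1 - A1) (B1 - A1) - pdot (A2 - A1) (B1 - A1) := by
      rw [show L1 - A2 = (L1 - A1) - (A2 - A1) by abel, show B2 - A2 = (B2 - A1) - (A2 - A1) by abel, hsum,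
        show (A2 - A1) + (B1 - A1) - (A2 - A1) = (B1 - A1) by abel, pdot_sub_left]
    have eY : pdot (L1 - B1) (B2 - B1) = pdot (L1 - A1) (A2 - A1) - pdot (B1 - A1) (A2 - A1) := by
      rw [show L1 - B1 = (L1 - A1) - (B1 - A1) by abel, show B2 - B1 = (B2 - A1) - (B1 - A1) by abel, hsum,
        show (A2 - A1) + (B1 - A1) - (B1 - A1) = (A2 - A1) by abel, pdot_sub_left]
    have hc : pdot (B1 - A1) (A2 - A1) = pdot (A2 - A1) (B1 - A1) := pdot_comm _ _
    have uX : pdot (L1 - A1) (A2 - A1) = 0 := by rw [eY] at fY; linarith only [r0, fY, iX, hc]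
    have uY : pdot (L1 - A1) (B1 - A1) = 0 := by rw [eX] at fX; linarith only [r0, fX, iY]
    exact final_step nv2 nv3 nu r0 uX uY
  · -- middle B1 : hmid : B1-A1 = α•(A2-A1)+β•(B2-A1)
    have hd2 : 0 ≤ pdot (0 - (A2 - A1)) ((B1 - A1) - (A2 - A1)) := by
      rw [show (0:ℝ×ℝ) - (A2 - A1) = A1 - A2 by abel, show (B1 - A1) - (A2 - A1) = B1 - A2 by abel]
      exact polar_lemma D2 cL3L4 cL3A1 cL4A1 cL3B1 cL4B1
    have he2 : 0 ≤ pdot (0 - (B2 - A1)) ((B1 - A1) - (B2 - A1)) := by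
      rw [show (0:ℝ×ℝ) - (B2 - A1) = A1 - B2 by abel, show (B1 - A1) - (B2 - A1) = B1 - B2 by abel]
      exact polar_lemma D4 cL7L8 cL7A1 cL8A1 cL7B1 cL8B1
    have hoa : 0 ≤ pdot ((A2 - A1) - (B1 - A1)) (0 - (B1 - A1)) := by
      rw [show (A2 - A1) - (B1 - A1) = A2 - B1 by abel, show (0:ℝ×ℝ) - (B1 - A1) = A1 - B1 by abel]
      exact polar_lemma D3 cL5L6 cL5A2 cL6A2 cL5A1 cL6A1
    have hob : 0 ≤ pdot ((B2 - A1) - (B1 - A1)) (0 - (B1 - A1)) := by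
      rw [show (B2 - A1) - (B1 - A1) = B2 - B1 by abel, show (0:ℝ×ℝ) - (B1 - A1) = A1 - B1 by abel]
      exact polar_lemma D3 cL5L6 cL5B2 cL6B2 cL5A1 cL6A1
    have hoc : 0 ≤ pdot ((A2 - A1) - (B1 - A1)) ((B2 - A1) - (B1 - A1)) := by
      rw [show (A2 - A1) - (B1 - A1) = A2 - B1 by abel, show (B2 - A1) - (B1 - A1) = B2 - B1 by abel]
      exact polar_lemma D3 cL5L6 cL5A2 cL6A2 cL5B2 cL6B2
    have nod : (B1 - A1) ≠ (A2 - A1) := fun h => (fun h => nA2B1 h.symm) (sub_left_injective h)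
    have noe : (B1 - A1) ≠ (B2 - A1) := fun h => nB1B2 (sub_left_injective h)
    have nde : (A2 - A1) ≠ (B2 - A1) := fun h => nA2B2 (sub_left_injective h)
    obtain ⟨r0, hsum⟩ := rect_lemma ha hb hmid w24 hd2 he2 hoa hob hoc nv2 nv4 nv3 nod noe nde
    have iX : pdot (L1 - A1) (A2 - A1) ≤ 0 := cL1A2
    have iY : pdot (L1 - A1) (B2 - A1) ≤ 0 := cL1B2
    have fX : 0 ≤ pdot (L1 - A2) (B1 - A2) := polar_lemma D2 cL3L4 cL3L1 cL4L1 cL3B1 cL4B1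
    have fY : 0 ≤ pdot (L1 - B2) (B1 - B2) := polar_lemma D4 cL7L8 cL7L1 cL8L1 cL7B1 cL8B1
    have eX : pdot (L1 - A2) (B1 - A2) = pdot (L1 - A1) (B2 - A1) - pdot (A2 - A1) (B2 - A1) := by
      rw [show L1 - A2 = (L1 - A1) - (A2 - A1) by abel, show B1 - A2 = (B1 - A1) - (A2 - A1) by abel, hsum,
        show (A2 - A1) + (B2 - A1) - (A2 - A1) = (B2 - A1) by abel, pdot_sub_left]
    have eY : pdot (L1 - B2) (B1 - B2) = pdot (L1 - A1) (A2 - A1) - pdot (B2 - A1) (A2 - A1) := by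
      rw [show L1 - B2 = (L1 - A1) - (B2 - A1) by abel, show B1 - B2 = (B1 - A1) - (B2 - A1) by abel, hsum,
        show (A2 - A1) + (B2 - A1) - (B2 - A1) = (A2 - A1) by abel, pdot_sub_left]
    have hc : pdot (B2 - A1) (A2 - A1) = pdot (A2 - A1) (B2 - A1) := pdot_comm _ _
    have uX : pdot (L1 - A1) (A2 - A1) = 0 := by rw [eY] at fY; linarith only [r0, fY, iX, hc]
    have uY : pdot (L1 - A1) (B2 - A1) = 0 := by rw [eX] at fX; linarith only [r0, fX, iY]
    exact final_step nv2 nv4 nu r0 uX uY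
  · -- middle A2 : hmid : A2-A1 = α•(B1-A1)+β•(B2-A1)
    have hd2 : 0 ≤ pdot (0 - (B1 - A1)) ((A2 - A1) - (B1 - A1)) := by
      rw [show (0:ℝ×ℝ) - (B1 - A1) = A1 - B1 by abel, show (A2 - A1) - (B1 - A1) = A2 - B1 by abel]
      exact polar_lemma D3 cL5L6 cL5A1 cL6A1 cL5A2 cL6A2
    have he2 : 0 ≤ pdot (0 - (B2 - A1)) ((A2 - A1) - (B2 - A1)) := by
      rw [show (0:ℝ×ℝ) - (B2 - A1) = A1 - B2 by abel, show (A2 - A1) - (B2 - A1) = A2 - B2 by abel]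
      exact polar_lemma D4 cL7L8 cL7A1 cL8A1 cL7A2 cL8A2
    have hoa : 0 ≤ pdot ((B1 - A1) - (A2 - A1)) (0 - (A2 - A1)) := by
      rw [show (B1 - A1) - (A2 - A1) = B1 - A2 by abel, show (0:ℝ×ℝ) - (A2 - A1) = A1 - A2 by abel]
      exact polar_lemma D2 cL3L4 cL3B1 cL4B1 cL3A1 cL4A1
    have hob : 0 ≤ pdot ((B2 - A1) - (A2 - A1)) (0 - (A2 - A1)) := by
      rw [show (B2 - A1) - (A2 - A1) = B2 - A2 by abel, show (0:ℝ×ℝ) - (A2 - A1) = A1 - A2 by abel]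
      exact polar_lemma D2 cL3L4 cL3B2 cL4B2 cL3A1 cL4A1
    have hoc : 0 ≤ pdot ((B1 - A1) - (A2 - A1)) ((B2 - A1) - (A2 - A1)) := by
      rw [show (B1 - A1) - (A2 - A1) = B1 - A2 by abel, show (B2 - A1) - (A2 - A1) = B2 - A2 by abel]
      exact polar_lemma D2 cL3L4 cL3B1 cL4B1 cL3B2 cL4B2
    have nod : (A2 - A1) ≠ (B1 - A1) := fun h => nA2B1 (sub_left_injective h)
    have noe : (A2 - A1) ≠ (B2 - A1) := fun h => nA2B2 (sub_left_injective h)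
    have nde : (B1 - A1) ≠ (B2 - A1) := fun h => nB1B2 (sub_left_injective h)
    obtain ⟨r0, hsum⟩ := rect_lemma ha hb hmid w34 hd2 he2 hoa hob hoc nv3 nv4 nv2 nod noe nde
    have iX : pdot (L1 - A1) (B1 - A1) ≤ 0 := cL1B1
    have iY : pdot (L1 - A1) (B2 - A1) ≤ 0 := cL1B2
    have fX : 0 ≤ pdot (L1 - B1) (A2 - B1) := polar_lemma D3 cL5L6 cL5L1 cL6L1 cL5A2 cL6A2
    have fY : 0 ≤ pdot (L1 - B2) (A2 - B2) := polar_lemma D4 cL7L8 cL7L1 cL8L1 cL7A2 cL8A2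
    have eX : pdot (L1 - B1) (A2 - B1) = pdot (L1 - A1) (B2 - A1) - pdot (B1 - A1) (B2 - A1) := by
      rw [show L1 - B1 = (L1 - A1) - (B1 - A1) by abel, show A2 - B1 = (A2 - A1) - (B1 - A1) by abel, hsum,
        show (B1 - A1) + (B2 - A1) - (B1 - A1) = (B2 - A1) by abel, pdot_sub_left]
    have eY : pdot (L1 - B2) (A2 - B2) = pdot (L1 - A1) (B1 - A1) - pdot (B2 - A1) (B1 - A1) := by
      rw [show L1 - B2 = (L1 - A1) - (B2 - A1) by abel, show A2 - B2 = (A2 - A1) - (B2 - A1) by abel, hsum,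
        show (B1 - A1) + (B2 - A1) - (B2 - A1) = (B1 - A1) by abel, pdot_sub_left]
    have hc : pdot (B2 - A1) (B1 - A1) = pdot (B1 - A1) (B2 - A1) := pdot_comm _ _
    have uX : pdot (L1 - A1) (B1 - A1) = 0 := by rw [eY] at fY; linarith only [r0, fY, iX, hc]
    have uY : pdot (L1 - A1) (B2 - A1) = 0 := by rw [eX] at fX; linarith only [r0, fX, iY]
    exact final_step nv3 nv4 nu r0 uX uY

lemma inner_nonneg_of_dist_le {E : Type*} [NormedAddCommGroup E] [InnerProductSpace ℝ E]
    (A B C : E) (h : ∀ s : ℝ, s ∈ Set.Icc (0:ℝ) 1 → dist B C ≤ dist ((1-s) • A + s • B) C) :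
    0 ≤ inner (B - A) (C - B) (𝕜 := ℝ) := by
  by_contra hlt
  push_neg at hlt
  set d := B - A with hd
  set g : ℝ := inner d (B - C) (𝕜 := ℝ) with hgdef
  have hg : 0 < g := by
    have h1 : inner d (C - B) (𝕜 := ℝ) = - g := by
      rw [hgdef, ← inner_neg_right]; congr 1; abel
    rw [h1] at hlt; linarith
  have hdne : d ≠ 0 := by
    intro h0; rw [hgdef, h0, inner_zero_left] at hg; exact lt_irrefl _ hg
  have hdn : (0:ℝ) < ‖d‖^2 := pow_pos (norm_pos_iff.mpr hdne) 2
  set ε : ℝ := min 1 (g / ‖d‖^2) with hε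
  have hε0 : 0 < ε := lt_min one_pos (div_pos hg hdn)
  have hε1 : ε ≤ 1 := min_le_left _ _
  have hεg : ε * ‖d‖^2 ≤ g := by
    have : ε ≤ g / ‖d‖^2 := min_le_right _ _
    calc ε * ‖d‖^2 ≤ (g / ‖d‖^2) * ‖d‖^2 := by nlinarith
    _ = g := by field_simp
  have hs : (1 - ε) ∈ Set.Icc (0:ℝ) 1 := ⟨by linarith, by linarith⟩
  have hdist := h (1 - ε) hs
  have hpt : (1 - (1-ε)) • A + (1-ε) • B = B - ε • d := by
    rw [hd]; module
  rw [hpt] at hdist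
  have hsq : dist B C ^ 2 ≤ dist (B - ε • d) C ^ 2 := by
    have := dist_nonneg (x := B) (y := C)
    nlinarith [dist_nonneg (x := B - ε • d) (y := C)]
  rw [dist_eq_norm, dist_eq_norm] at hsq
  have hexp : B - ε • d - C = (B - C) - ε • d := by abel
  rw [hexp, norm_sub_sq_real (B - C) (ε • d)] at hsq
  have hin : inner (B - C) (ε • d) (𝕜 := ℝ) = ε * g := by
    rw [real_inner_smul_right, hgdef, real_inner_comm]
  have hns : ‖ε • d‖^2 = ε^2 * ‖d‖^2 := by
    rw [norm_smul]; simp [abs_of_pos hε0]; ring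
  rw [hin, hns] at hsq
  nlinarith [hsq, hεg, hg, hε0]

lemma leaf_constraint {V : Type*} {G : SimpleGraph V} {ρ : V → EuclideanSpace ℝ (Fin 2)}
    (hd : IsSelfApproachingDrawing G ρ) (ℓ par z : V) (hne : ℓ ≠ z)
    (hnbr : ∀ v, G.Adj ℓ v → v = par) :
    0 ≤ inner (ρ par - ρ ℓ) (ρ z - ρ par) (𝕜 := ℝ) := by
  obtain ⟨w, hw, hsa⟩ := hd.2 ℓ z hne
  apply inner_nonneg_of_dist_le
  intro s hs
  cases w with
  | nil => exact absurd rfl hne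
  | cons hadj w' =>
    rename_i v
    have hv : v = par := hnbr v hadj
    set p : ℕ → EuclideanSpace ℝ (Fin 2) :=
      fun n => ρ ((SimpleGraph.Walk.cons hadj w').getVert n) with hp
    have hm : (SimpleGraph.Walk.cons hadj w').length = w'.length + 1 := by
      simp [SimpleGraph.Walk.length_cons]
    have key := hsa 0 0 w'.length s 1 1
      (by omega) (by omega) (by omega)
      hs ⟨zero_le_one, le_refl 1⟩ ⟨zero_le_one, le_refl 1⟩
      (Or.inr ⟨rfl, hs.2⟩)
      (by rcases Nat.eq_zero_or_pos w'.length with h0 | h0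
          · exact Or.inr ⟨h0.symm, le_refl 1⟩
          · exact Or.inl h0)
    have e1 : polyPt p 0 1 = p 1 := by simp [polyPt]
    have e2 : polyPt p w'.length 1 = p (w'.length + 1) := by simp [polyPt]
    have e3 : polyPt p 0 s = (1 - s) • p 0 + s • p 1 := by simp [polyPt]
    rw [e1, e2, e3] at key
    have hp0 : p 0 = ρ ℓ := by simp [hp]
    have hp1 : p 1 = ρ par := by
      show ρ ((SimpleGraph.Walk.cons hadj w').getVert 1) = ρ par
      simp [SimpleGraph.Walk.getVert_cons, hv]
    have hpz : p (w'.length + 1) = ρ z := by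
      rw [hp]
      have : (SimpleGraph.Walk.cons hadj w').getVert ((SimpleGraph.Walk.cons hadj w').length) = z :=
        SimpleGraph.Walk.getVert_length _
      rw [hm] at this
      simp [this]
    rw [hp0, hp1, hpz] at key
    exact key

lemma inner_to_pdot (x y z : EuclideanSpace ℝ (Fin 2))
    (h : 0 ≤ inner (y - x) (z - y) (𝕜 := ℝ)) :
    pdot ((x 0, x 1) - (y 0, y 1)) ((z 0, z 1) - (y 0, y 1)) ≤ 0 := by
  have e : inner (y - x) (z - y) (𝕜 := ℝ)
      = (y 0 - x 0) * (z 0 - y 0) + (y 1 - x 1) * (z 1 - y 1) := by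
    simp [PiLp.inner_apply, Fin.sum_univ_two, RCLike.inner_apply, PiLp.sub_apply]; ring
  rw [e] at h
  show ((x 0, x 1) - (y 0, y 1)).1 * ((z 0, z 1) - (y 0, y 1)).1
      + ((x 0, x 1) - (y 0, y 1)).2 * ((z 0, z 1) - (y 0, y 1)).2 ≤ 0
  simp only [Prod.fst_sub, Prod.snd_sub]
  nlinarith [h]

lemma adj6 : ∀ v : Fin 14, crabGraph.Adj 6 v → v = 2 := by
  intro v h
  simp only [crabGraph, SimpleGraph.fromEdgeSet_adj, Set.mem_insert_iff,
    Set.mem_singleton_iff, Sym2.eq, Sym2.rel_iff', Prod.mk.injEq, Prod.swap_prod_mk] at h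
  fin_cases v <;> simp_all

lemma adj7 : ∀ v : Fin 14, crabGraph.Adj 7 v → v = 2 := by
  intro v h
  simp only [crabGraph, SimpleGraph.fromEdgeSet_adj, Set.mem_insert_iff,
    Set.mem_singleton_iff, Sym2.eq, Sym2.rel_iff', Prod.mk.injEq, Prod.swap_prod_mk] at h
  fin_cases v <;> simp_all

lemma adj8 : ∀ v : Fin 14, crabGraph.Adj 8 v → v = 3 := by
  intro v h
  simp only [crabGraph, SimpleGraph.fromEdgeSet_adj, Set.mem_insert_iff,
    Set.mem_singleton_iff, Sym2.eq, Sym2.rel_iff', Prod.mk.injEq, Prod.swap_prod_mk] at h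
  fin_cases v <;> simp_all

lemma adj9 : ∀ v : Fin 14, crabGraph.Adj 9 v → v = 3 := by
  intro v h
  simp only [crabGraph, SimpleGraph.fromEdgeSet_adj, Set.mem_insert_iff,
    Set.mem_singleton_iff, Sym2.eq, Sym2.rel_iff', Prod.mk.injEq, Prod.swap_prod_mk] at h
  fin_cases v <;> simp_all

lemma adj10 : ∀ v : Fin 14, crabGraph.Adj 10 v → v = 4 := by
  intro v h
  simp only [crabGraph, SimpleGraph.fromEdgeSet_adj, Set.mem_insert_iff,
    Set.mem_singleton_iff, Sym2.eq, Sym2.rel_iff', Prod.mk.injEq, Prod.swap_prod_mk] at h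
  fin_cases v <;> simp_all

lemma adj11 : ∀ v : Fin 14, crabGraph.Adj 11 v → v = 4 := by
  intro v h
  simp only [crabGraph, SimpleGraph.fromEdgeSet_adj, Set.mem_insert_iff,
    Set.mem_singleton_iff, Sym2.eq, Sym2.rel_iff', Prod.mk.injEq, Prod.swap_prod_mk] at h
  fin_cases v <;> simp_all

lemma adj12 : ∀ v : Fin 14, crabGraph.Adj 12 v → v = 5 := by
  intro v h
  simp only [crabGraph, SimpleGraph.fromEdgeSet_adj, Set.mem_insert_iff,
    Set.mem_singleton_iff, Sym2.eq, Sym2.rel_iff', Prod.mk.injEq, Prod.swap_prod_mk] at h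
  fin_cases v <;> simp_all

lemma adj13 : ∀ v : Fin 14, crabGraph.Adj 13 v → v = 5 := by
  intro v h
  simp only [crabGraph, SimpleGraph.fromEdgeSet_adj, Set.mem_insert_iff,
    Set.mem_singleton_iff, Sym2.eq, Sym2.rel_iff', Prod.mk.injEq, Prod.swap_prod_mk] at h
  fin_cases v <;> simp_all

/-- The crab graph admits no self-approaching drawing in the plane. -/
theorem crabGraph_no_selfApproachingDrawing :
    ¬ ∃ ρ : Fin 14 → EuclideanSpace ℝ (Fin 2),
        IsSelfApproachingDrawing crabGraph ρ := by
  rintro ⟨ρ, hρ⟩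
  have pne : ∀ i j : Fin 14, i ≠ j → ((ρ i 0, ρ i 1) : ℝ × ℝ) ≠ (ρ j 0, ρ j 1) := by
    intro i j hij h
    apply hij
    apply hρ.1
    ext k
    fin_cases k
    · exact congrArg Prod.fst h
    · exact congrArg Prod.snd h
  exact geom (ρ 2 0, ρ 2 1) (ρ 3 0, ρ 3 1) (ρ 4 0, ρ 4 1) (ρ 5 0, ρ 5 1) (ρ 6 0, ρ 6 1) (ρ 7 0, ρ 7 1) (ρ 8 0, ρ 8 1) (ρ 9 0, ρ 9 1) (ρ 10 0, ρ 10 1) (ρ 11 0, ρ 11 1) (ρ 12 0, ρ 12 1) (ρ 13 0, ρ 13 1)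
    (pne 2 3 (by decide))
    (pne 2 4 (by decide))
    (pne 2 5 (by decide))
    (pne 3 4 (by decide))
    (pne 3 5 (by decide))
    (pne 4 5 (by decide))
    (pne 6 2 (by decide))
    (pne 7 2 (by decide))
    (pne 8 3 (by decide))
    (pne 9 3 (by decide))
    (pne 10 4 (by decide))
    (pne 11 4 (by decide))
    (pne 12 5 (by decide))
    (pne 13 5 (by decide))
    (inner_to_pdot (ρ 6) (ρ 2) (ρ 3) (leaf_constraint hρ 6 2 3 (by decide) adj6))
    (inner_to_pdot (ρ 6) (ρ 2) (ρ 4) (leaf_constraint hρ 6 2 4 (by decide) adj6))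
    (inner_to_pdot (ρ 6) (ρ 2) (ρ 5) (leaf_constraint hρ 6 2 5 (by decide) adj6))
    (inner_to_pdot (ρ 6) (ρ 2) (ρ 7) (leaf_constraint hρ 6 2 7 (by decide) adj6))
    (inner_to_pdot (ρ 6) (ρ 2) (ρ 8) (leaf_constraint hρ 6 2 8 (by decide) adj6))
    (inner_to_pdot (ρ 6) (ρ 2) (ρ 9) (leaf_constraint hρ 6 2 9 (by decide) adj6))
    (inner_to_pdot (ρ 7) (ρ 2) (ρ 3) (leaf_constraint hρ 7 2 3 (by decide) adj7))
    (inner_to_pdot (ρ 7) (ρ 2) (ρ 4) (leaf_constraint hρ 7 2 4 (by decide) adj7))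
    (inner_to_pdot (ρ 7) (ρ 2) (ρ 5) (leaf_constraint hρ 7 2 5 (by decide) adj7))
    (inner_to_pdot (ρ 7) (ρ 2) (ρ 6) (leaf_constraint hρ 7 2 6 (by decide) adj7))
    (inner_to_pdot (ρ 7) (ρ 2) (ρ 8) (leaf_constraint hρ 7 2 8 (by decide) adj7))
    (inner_to_pdot (ρ 7) (ρ 2) (ρ 9) (leaf_constraint hρ 7 2 9 (by decide) adj7))
    (inner_to_pdot (ρ 8) (ρ 3) (ρ 2) (leaf_constraint hρ 8 3 2 (by decide) adj8))
    (inner_to_pdot (ρ 8) (ρ 3) (ρ 4) (leaf_constraint hρ 8 3 4 (by decide) adj8))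
    (inner_to_pdot (ρ 8) (ρ 3) (ρ 5) (leaf_constraint hρ 8 3 5 (by decide) adj8))
    (inner_to_pdot (ρ 8) (ρ 3) (ρ 6) (leaf_constraint hρ 8 3 6 (by decide) adj8))
    (inner_to_pdot (ρ 8) (ρ 3) (ρ 7) (leaf_constraint hρ 8 3 7 (by decide) adj8))
    (inner_to_pdot (ρ 8) (ρ 3) (ρ 9) (leaf_constraint hρ 8 3 9 (by decide) adj8))
    (inner_to_pdot (ρ 9) (ρ 3) (ρ 2) (leaf_constraint hρ 9 3 2 (by decide) adj9))
    (inner_to_pdot (ρ 9) (ρ 3) (ρ 4) (leaf_constraint hρ 9 3 4 (by decide) adj9))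
    (inner_to_pdot (ρ 9) (ρ 3) (ρ 5) (leaf_constraint hρ 9 3 5 (by decide) adj9))
    (inner_to_pdot (ρ 9) (ρ 3) (ρ 6) (leaf_constraint hρ 9 3 6 (by decide) adj9))
    (inner_to_pdot (ρ 9) (ρ 3) (ρ 7) (leaf_constraint hρ 9 3 7 (by decide) adj9))
    (inner_to_pdot (ρ 9) (ρ 3) (ρ 8) (leaf_constraint hρ 9 3 8 (by decide) adj9))
    (inner_to_pdot (ρ 10) (ρ 4) (ρ 2) (leaf_constraint hρ 10 4 2 (by decide) adj10))
    (inner_to_pdot (ρ 10) (ρ 4) (ρ 3) (leaf_constraint hρ 10 4 3 (by decide) adj10))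
    (inner_to_pdot (ρ 10) (ρ 4) (ρ 5) (leaf_constraint hρ 10 4 5 (by decide) adj10))
    (inner_to_pdot (ρ 10) (ρ 4) (ρ 6) (leaf_constraint hρ 10 4 6 (by decide) adj10))
    (inner_to_pdot (ρ 10) (ρ 4) (ρ 7) (leaf_constraint hρ 10 4 7 (by decide) adj10))
    (inner_to_pdot (ρ 10) (ρ 4) (ρ 11) (leaf_constraint hρ 10 4 11 (by decide) adj10))
    (inner_to_pdot (ρ 11) (ρ 4) (ρ 2) (leaf_constraint hρ 11 4 2 (by decide) adj11))
    (inner_to_pdot (ρ 11) (ρ 4) (ρ 3) (leaf_constraint hρ 11 4 3 (by decide) adj11))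
    (inner_to_pdot (ρ 11) (ρ 4) (ρ 5) (leaf_constraint hρ 11 4 5 (by decide) adj11))
    (inner_to_pdot (ρ 11) (ρ 4) (ρ 6) (leaf_constraint hρ 11 4 6 (by decide) adj11))
    (inner_to_pdot (ρ 11) (ρ 4) (ρ 7) (leaf_constraint hρ 11 4 7 (by decide) adj11))
    (inner_to_pdot (ρ 11) (ρ 4) (ρ 10) (leaf_constraint hρ 11 4 10 (by decide) adj11))
    (inner_to_pdot (ρ 12) (ρ 5) (ρ 2) (leaf_constraint hρ 12 5 2 (by decide) adj12))
    (inner_to_pdot (ρ 12) (ρ 5) (ρ 3) (leaf_constraint hρ 12 5 3 (by decide) adj12))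
    (inner_to_pdot (ρ 12) (ρ 5) (ρ 4) (leaf_constraint hρ 12 5 4 (by decide) adj12))
    (inner_to_pdot (ρ 12) (ρ 5) (ρ 6) (leaf_constraint hρ 12 5 6 (by decide) adj12))
    (inner_to_pdot (ρ 12) (ρ 5) (ρ 7) (leaf_constraint hρ 12 5 7 (by decide) adj12))
    (inner_to_pdot (ρ 12) (ρ 5) (ρ 13) (leaf_constraint hρ 12 5 13 (by decide) adj12))
    (inner_to_pdot (ρ 13) (ρ 5) (ρ 2) (leaf_constraint hρ 13 5 2 (by decide) adj13))
    (inner_to_pdot (ρ 13) (ρ 5) (ρ 3) (leaf_constraint hρ 13 5 3 (by decide) adj13))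
    (inner_to_pdot (ρ 13) (ρ 5) (ρ 4) (leaf_constraint hρ 13 5 4 (by decide) adj13))
    (inner_to_pdot (ρ 13) (ρ 5) (ρ 6) (leaf_constraint hρ 13 5 6 (by decide) adj13))
    (inner_to_pdot (ρ 13) (ρ 5) (ρ 7) (leaf_constraint hρ 13 5 7 (by decide) adj13))
    (inner_to_pdot (ρ 13) (ρ 5) (ρ 12) (leaf_constraint hρ 13 5 12 (by decide) adj13))
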